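/- Let G be a finite group, π a set of primes, q ∈ π, and Q a Sylow q-subgroup of G. If Z(Q) ≤ Z(G) and C_G(Q) has a normal Hall π-subgroup, then the q-part of |S_{q'}(G_π)| equals |Z(G)|_q. -/

import Mathlib

/-- A π-element: every prime dividing its order lies in π. -/
def IsPiElement {G : Type*} [Group G] (π : Set ℕ) (g : G) : Prop :=
  ∀ p : ℕ, p.Prime → p ∣ orderOf g → p ∈ π

open Subgroup
set_option linter.unusedSectionVars false

section Helpers

variable {G : Type*} [Group G] {q : ℕ} [Fact q.Prime]

/-- q-power order elements. -/
private def QEl (q : ℕ) {G : Type*} [Group G] (g : G) : Prop := ∃ n : ℕ, orderOf g = q ^ n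

lemma isPGroup_zpowers {x : G} (h : QEl q x) : IsPGroup q (Subgroup.zpowers x) := by
  obtain ⟨n, hn⟩ := h
  intro g
  refine ⟨n, ?_⟩
  have : orderOf (g : G) ∣ q ^ n := hn ▸ orderOf_dvd_of_mem_zpowers g.2
  have : (g : G) ^ q ^ n = 1 := orderOf_dvd_iff_pow_eq_one.mp this
  exact Subtype.ext (by simpa using this)

lemma qel_of_mem_pgroup {H : Subgroup G} (h : IsPGroup q H) {x : G} (hx : x ∈ H) : QEl q x := by
  obtain ⟨k, hk⟩ := (IsPGroup.iff_orderOf.mp h) ⟨x, hx⟩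
  exact ⟨k, by rw [← Subgroup.orderOf_mk x hx, hk]⟩

/-- uniqueness of central-q × q'-decomposition -/
lemma decomp_unique {a b a' b' : G} (hac : a ∈ Subgroup.center G) (ha'c : a' ∈ Subgroup.center G)
    (ha : QEl q a) (ha' : QEl q a') (hb : ¬ q ∣ orderOf b) (hb' : ¬ q ∣ orderOf b')
    (h : a * b = a' * b') : a = a' ∧ b = b' := by
  have hq : q.Prime := Fact.out
  have h1 : a'⁻¹ * a * b = b' := by rw [mul_assoc, h]; group
  have hu : a'⁻¹ * a = b' * b⁻¹ := by rw [← h1]; group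
  obtain ⟨n, hn⟩ := ha; obtain ⟨m, hm⟩ := ha'
  have hca' : ∀ x : G, Commute a' x := fun x => (Subgroup.mem_center_iff.mp ha'c x).symm
  have hca : ∀ x : G, Commute a x := fun x => (Subgroup.mem_center_iff.mp hac x).symm
  have cab : Commute a'⁻¹ a := (hca' a).inv_left
  have d1 : orderOf (a'⁻¹ * a) ∣ q ^ m * q ^ n := by
    have := cab.orderOf_mul_dvd_mul_orderOf
    rwa [orderOf_inv, hm, hn] at this
  have cbb : Commute b' b := by
    rw [← h1]
    exact Commute.mul_left (Commute.mul_left (hca' b).inv_left (hca b)) (Commute.refl b)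
  have d2 : orderOf (a'⁻¹ * a) ∣ orderOf b' * orderOf b := by
    rw [hu]
    have := (cbb.inv_right).orderOf_mul_dvd_mul_orderOf
    rwa [orderOf_inv] at this
  have hcop : Nat.Coprime (q ^ m * q ^ n) (orderOf b' * orderOf b) := by
    rw [← pow_add]
    refine Nat.Coprime.pow_left _ ((Nat.Prime.coprime_iff_not_dvd hq).mpr ?_)
    intro hd
    rcases hq.dvd_mul.mp hd with h' | h'
    · exact hb' h'
    · exact hb h'
  have hone : a'⁻¹ * a = 1 := by
    rw [← orderOf_eq_one_iff]
    exact Nat.eq_one_of_dvd_coprimes hcop d1 d2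
  have haa : a = a' := by
    rw [inv_mul_eq_one] at hone; exact hone.symm
  refine ⟨haa, ?_⟩
  have : b' * b⁻¹ = 1 := by rw [← hu, hone]
  rw [mul_inv_eq_one] at this; exact this.symm

/-- existence of q × q'-decomposition -/
lemma exists_decomp [Finite G] (g : G) :
    ∃ a b : G, a * b = g ∧ a ∈ Subgroup.zpowers g ∧ b ∈ Subgroup.zpowers g ∧
      QEl q a ∧ ¬ q ∣ orderOf b := by
  have hq : q.Prime := Fact.out
  set n := orderOf g with hn
  have hn0 : n ≠ 0 := (orderOf_pos g).ne'
  set m := q ^ n.factorization q with hm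
  set k := ordCompl[q] n with hk
  have hmk : m * k = n := Nat.ordProj_mul_ordCompl_eq_self n q
  have hqk : ¬ q ∣ k := Nat.not_dvd_ordCompl hq hn0
  have hcop : Nat.Coprime k m := Nat.Coprime.pow_right _
    (Nat.coprime_comm.mp ((Nat.Prime.coprime_iff_not_dvd hq).mpr hqk))
  rcases eq_or_lt_of_le (Nat.one_le_iff_ne_zero.mpr
    (pow_ne_zero _ hq.pos.ne') : 1 ≤ m) with h1 | h1
  · -- m = 1 : g itself is a q'-element
    refine ⟨1, g, one_mul g, Subgroup.one_mem _, Subgroup.mem_zpowers g, ⟨0, by simp⟩, ?_⟩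
    intro hd
    have hpos := hq.factorization_pos_of_dvd hn0 hd
    have : 1 < m := by
      rw [hm]
      exact Nat.one_lt_pow hpos.ne' hq.one_lt
    omega
  · obtain ⟨c, -, hc⟩ := Nat.exists_mul_mod_eq_one_of_coprime hcop h1
    set a := g ^ (k * c) with ha
    refine ⟨a, a⁻¹ * g, by group, Subgroup.pow_mem _ (Subgroup.mem_zpowers g) _,
      Subgroup.mul_mem _ (Subgroup.inv_mem _ (Subgroup.pow_mem _ (Subgroup.mem_zpowers g) _))
        (Subgroup.mem_zpowers g), ?_, ?_⟩
    · -- a is a q-element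
      have hdvd : n ∣ k * c * m := ⟨c, by rw [← hmk]; ring⟩
      have hpow : a ^ m = 1 := by
        rw [ha, ← pow_mul]
        exact orderOf_dvd_iff_pow_eq_one.mp (hn ▸ hdvd)
      obtain ⟨j, _, hj⟩ := (Nat.dvd_prime_pow hq).mp
        (hm ▸ orderOf_dvd_iff_pow_eq_one.mpr hpow)
      exact ⟨j, hj⟩
    · -- b is a q'-element
      have hcomm : Commute a⁻¹ g := (((Commute.refl g).pow_right (k * c)).symm).inv_left
      have h2 : k * c ≡ 1 [MOD m] := by
        show k * c % m = 1 % m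
        rw [hc, Nat.one_mod_eq_one.mpr (by omega)]
      have h3 : k * (k * c) ≡ k * 1 [MOD k * m] := h2.mul_left' k
      have h4 : k * c * k ≡ k [MOD n] := by
        have : k * (k * c) = k * c * k := by ring
        rw [this, mul_one] at h3
        rwa [mul_comm k m, hmk] at h3
      have hak : a ^ k = g ^ k := by
        rw [ha, ← pow_mul]
        exact (pow_eq_pow_iff_modEq).mpr h4
      have hbk : (a⁻¹ * g) ^ k = 1 := by
        rw [hcomm.mul_pow, inv_pow, hak]
        group
      intro hd
      exact hqk (hd.trans (orderOf_dvd_iff_pow_eq_one.mpr hbk))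

/-- a q-element centralizing a Sylow q-subgroup lies in it -/
lemma mem_sylow_of_centralizes (P : Sylow q G) {x : G} (hx : QEl q x)
    (hc : x ∈ Subgroup.centralizer (P : Set G)) : x ∈ (P : Subgroup G) := by
  have hcomm : ∀ h ∈ (P : Subgroup G), x * h = h * x := fun h hh =>
    (Subgroup.mem_centralizer_iff.mp hc h hh).symm
  have hxn : x ∈ Subgroup.normalizer ((P : Subgroup G) : Set G) := by
    rw [Subgroup.mem_normalizer_iff]
    intro h
    constructor
    · intro hh
      have : x * h * x⁻¹ = h := by rw [hcomm h hh]; group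
      rwa [this]
    · intro hh
      have h2 := hcomm _ hh
      have h4 : x * (x * h * x⁻¹) = x * h := by rw [h2]; group
      have h5 : x * h * x⁻¹ = h := mul_left_cancel h4
      rwa [h5] at hh
  have hnorm : Subgroup.zpowers x ≤ Subgroup.normalizer ((P : Subgroup G) : Set G) :=
    Subgroup.zpowers_le.mpr hxn
  have hsup : IsPGroup q ((Subgroup.zpowers x ⊔ (P : Subgroup G) : Subgroup G)) :=
    IsPGroup.to_sup_of_normal_right' (isPGroup_zpowers hx) P.2 hnorm
  have heq := P.3 hsup le_sup_right
  have hmem : x ∈ Subgroup.zpowers x ⊔ (P : Subgroup G) :=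
    (le_sup_left : Subgroup.zpowers x ≤ _) (Subgroup.mem_zpowers x)
  rwa [heq] at hmem

/-- if the centralizer of x has q'-index, some Sylow q-subgroup centralizes x -/
lemma exists_sylow_le_centralizer [Finite G] {x : G}
    (h : ¬ q ∣ (Subgroup.centralizer {x}).index) :
    ∃ P : Sylow q G, (P : Subgroup G) ≤ Subgroup.centralizer {x} := by
  set H := Subgroup.centralizer ({x} : Set G) with hH
  let P' : Sylow q ↥H := Classical.arbitrary _
  let L : Subgroup G := (P' : Subgroup ↥H).map H.subtype
  have hG0 : Nat.card G ≠ 0 := Nat.card_pos.ne'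
  have hH0 : Nat.card ↥H ≠ 0 := Nat.card_pos.ne'
  have hmul := H.card_mul_index
  have hI0 : H.index ≠ 0 := fun h0 => hG0 (by rw [← hmul, h0, mul_zero])
  have hfac : (Nat.card G).factorization q = (Nat.card ↥H).factorization q := by
    conv_lhs => rw [← hmul]
    rw [Nat.factorization_mul hH0 hI0, Finsupp.add_apply,
      Nat.factorization_eq_zero_of_not_dvd h, add_zero]
  have hcard : Nat.card L = q ^ (Nat.card G).factorization q := by
    have h1 : Nat.card L = Nat.card (P' : Subgroup ↥H) :=
      (Nat.card_congr (Subgroup.equivMapOfInjective _ _ H.subtype_injective).toEquiv).symm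
    rw [h1, P'.card_eq_multiplicity, hfac]
  exact ⟨Sylow.ofCard L hcard, Subgroup.map_subtype_le _⟩

lemma not_dvd_index_of_sylow_le [Finite G] {H : Subgroup G} (P : Sylow q G)
    (h : (P : Subgroup G) ≤ H) : ¬ q ∣ H.index := by
  intro hd
  have hPH : (q : ℕ) ^ (Nat.card G).factorization q ∣ Nat.card H := by
    rw [← P.card_eq_multiplicity]
    exact Subgroup.card_dvd_of_le h
  have hdvd0 : q ^ ((Nat.card G).factorization q) * q ∣ Nat.card ↥H * H.index :=
    mul_dvd_mul hPH hd
  rw [H.card_mul_index, ← pow_succ] at hdvd0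
  exact Nat.pow_succ_factorization_not_dvd Nat.card_pos.ne' Fact.out hdvd0

/-- orbit counting modulo q for conjugation action of a q-subgroup -/
lemma card_modEq_fixed [Finite G] (U : Subgroup G) (hU : IsPGroup q U) (S : Set G)
    (hS : ∀ u ∈ U, ∀ g ∈ S, u * g * u⁻¹ ∈ S) :
    Nat.card S ≡ Nat.card {g : G | g ∈ S ∧ ∀ u ∈ U, u * g = g * u} [MOD q] := by
  letI act : MulAction U S :=
    { smul := fun u g => ⟨u.1 * g.1 * u.1⁻¹, hS _ u.2 _ g.2⟩
      one_smul := fun g => Subtype.ext (by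
        show (1 : G) * g.1 * (1 : G)⁻¹ = g.1
        group)
      mul_smul := fun u v g => Subtype.ext (by
        show (u.1 * v.1) * g.1 * (u.1 * v.1)⁻¹ = u.1 * (v.1 * g.1 * v.1⁻¹) * u.1⁻¹
        group) }
  have e : MulAction.fixedPoints U S ≃ {g : G | g ∈ S ∧ ∀ u ∈ U, u * g = g * u} :=
    { toFun := fun x => ⟨x.1.1, x.1.2, fun u hu => by
        have h := congrArg Subtype.val (x.2 ⟨u, hu⟩)
        change u * x.1.1 * u⁻¹ = x.1.1 at h
        calc u * x.1.1 = (u * x.1.1 * u⁻¹) * u := by group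
        _ = x.1.1 * u := by rw [h]⟩
      invFun := fun g => ⟨⟨g.1, g.2.1⟩, by
        intro u
        apply Subtype.ext
        change u.1 * g.1 * u.1⁻¹ = g.1
        rw [g.2.2 u.1 u.2]
        group⟩
      left_inv := fun x => Subtype.ext (Subtype.ext rfl)
      right_inv := fun g => Subtype.ext rfl }
  calc Nat.card S ≡ Nat.card (MulAction.fixedPoints U S) [MOD q] :=
        hU.card_modEq_card_fixedPoints S
  _ = _ := Nat.card_congr e

/-- product decomposition of the cardinality of S -/
lemma card_set_eq_mul {S T : Set G} [Finite G]
    (hT : ∀ t ∈ T, ¬ q ∣ orderOf t)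
    (hdec : ∀ g ∈ S, ∃ a b : G, a * b = g ∧ (a ∈ Subgroup.center G ∧ QEl q a) ∧ b ∈ T)
    (hmul : ∀ a, a ∈ Subgroup.center G → QEl q a → ∀ t ∈ T, a * t ∈ S) :
    Nat.card S = Nat.card {z : G | z ∈ Subgroup.center G ∧ QEl q z} * Nat.card T := by
  set Zc := {z : G | z ∈ Subgroup.center G ∧ QEl q z} with hZc
  let f : Zc × T → S := fun zt => ⟨zt.1.1 * zt.2.1, hmul _ zt.1.2.1 zt.1.2.2 _ zt.2.2⟩
  have hbij : Function.Bijective f := by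
    constructor
    · rintro ⟨⟨z, hz⟩, ⟨t, ht⟩⟩ ⟨⟨z', hz'⟩, ⟨t', ht'⟩⟩ h
      have h' : z * t = z' * t' := congrArg Subtype.val h
      obtain ⟨h1, h2⟩ := decomp_unique hz.1 hz'.1 hz.2 hz'.2 (hT _ ht) (hT _ ht') h'
      simp [Prod.ext_iff, Subtype.ext_iff, h1, h2]
    · rintro ⟨g, hg⟩
      obtain ⟨a, b, hab, hmem, hbT⟩ := hdec g hg
      exact ⟨⟨⟨a, hmem⟩, ⟨b, hbT⟩⟩, Subtype.ext hab⟩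
  rw [← Nat.card_prod]
  exact (Nat.card_eq_of_bijective f hbij).symm

/-- in a group whose q-elements are central, the number of q-regular elements is prime to q -/
lemma not_dvd_card_qreg_of_central {H : Type*} [Group H] [Finite H]
    (hc : ∀ x : H, QEl q x → x ∈ Subgroup.center H) :
    ¬ q ∣ Nat.card {x : H // ¬ q ∣ orderOf x} := by
  have hq : q.Prime := Fact.out
  set T : Set H := {x : H | ¬ q ∣ orderOf x} with hT
  have hcard : Nat.card H
      = Nat.card {z : H | z ∈ Subgroup.center H ∧ QEl q z} * Nat.card T := by
    have h0 := card_set_eq_mul (S := (Set.univ : Set H)) (T := T) (fun t ht => ht)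
      (fun g _ => by
        obtain ⟨a, b, hab, _, _, ha, hb⟩ := exists_decomp (q := q) g
        exact ⟨a, b, hab, ⟨hc a ha, ha⟩, hb⟩)
      (fun a _ _ t _ => Set.mem_univ _)
    rwa [Nat.card_congr (Equiv.Set.univ H)] at h0
  let P : Sylow q H := Classical.arbitrary _
  have hPc : ∀ x ∈ (P : Subgroup H), x ∈ Subgroup.center H ∧ QEl q x := fun x hx =>
    ⟨hc x (qel_of_mem_pgroup P.2 hx), qel_of_mem_pgroup P.2 hx⟩
  have hnormal : (P : Subgroup H).Normal := by
    constructor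
    intro n hn g
    have hcn := Subgroup.mem_center_iff.mp (hPc n hn).1 g
    have : g * n * g⁻¹ = n := by rw [hcn]; group
    rwa [this]
  haveI := Sylow.unique_of_normal P hnormal
  have hZeq : {z : H | z ∈ Subgroup.center H ∧ QEl q z} = ((P : Subgroup H) : Set H) := by
    ext z
    constructor
    · rintro ⟨hzc, hzq⟩
      obtain ⟨P₂, hP₂⟩ := (isPGroup_zpowers hzq).exists_le_sylow
      have he : P₂ = P := Subsingleton.elim _ _
      exact he ▸ hP₂ (Subgroup.mem_zpowers z)
    · intro hz
      exact hPc z hz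
  have hZcard : Nat.card {z : H | z ∈ Subgroup.center H ∧ QEl q z}
      = q ^ (Nat.card H).factorization q := by
    rw [hZeq, SetLike.coe_sort_coe]
    exact P.card_eq_multiplicity
  intro hd
  have hd' : q ∣ Nat.card T := hd
  have h2 : q ^ (Nat.card H).factorization q * q
      ∣ Nat.card {z : H | z ∈ Subgroup.center H ∧ QEl q z} * Nat.card T := by
    rw [hZcard]
    exact mul_dvd_mul dvd_rfl hd'
  rw [← hcard, ← pow_succ] at h2
  exact Nat.pow_succ_factorization_not_dvd Nat.card_pos.ne' hq h2

/-- in any finite group, the number of q-regular elements is prime to q -/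
lemma not_dvd_card_qreg (H : Type*) [Group H] [Finite H] :
    ¬ q ∣ Nat.card {x : H // ¬ q ∣ orderOf x} := by
  have hq : q.Prime := Fact.out
  let P : Sylow q H := Classical.arbitrary _
  set C := Subgroup.centralizer ((P : Subgroup H) : Set H) with hC
  set T : Set H := {x : H | ¬ q ∣ orderOf x} with hT
  have hinv : ∀ u ∈ (P : Subgroup H), ∀ g ∈ T, u * g * u⁻¹ ∈ T := by
    intro u hu g hg
    have horder : orderOf (u * g * u⁻¹) = orderOf g := by
      have h0 := orderOf_injective (MulAut.conj u).toMonoidHom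
        (MulEquiv.injective (MulAut.conj u)) g
      simpa using h0
    simpa [hT, Set.mem_setOf_eq, horder] using hg
  have hmod := card_modEq_fixed (P : Subgroup H) P.2 T hinv
  have hfix : {g : H | g ∈ T ∧ ∀ u ∈ (P : Subgroup H), u * g = g * u}
      = {g : H | g ∈ C ∧ ¬ q ∣ orderOf g} := by
    ext g
    simp only [Set.mem_setOf_eq]
    constructor
    · rintro ⟨h1, h2⟩
      exact ⟨Subgroup.mem_centralizer_iff.mpr (fun u hu => h2 u hu), h1⟩
    · rintro ⟨h1, h2⟩
      exact ⟨h2, fun u hu => Subgroup.mem_centralizer_iff.mp h1 u hu⟩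
  have hcC : ∀ x : ↥C, QEl q x → x ∈ Subgroup.center ↥C := by
    intro x hx
    have hxH : QEl q (x : H) := by
      obtain ⟨n, hn⟩ := hx
      exact ⟨n, by rw [Subgroup.orderOf_coe, hn]⟩
    have hxP : (x : H) ∈ (P : Subgroup H) := mem_sylow_of_centralizes P hxH x.2
    rw [Subgroup.mem_center_iff]
    intro y
    apply Subtype.ext
    simp only [Subgroup.coe_mul]
    exact (Subgroup.mem_centralizer_iff.mp y.2 _ hxP).symm
  have hne := not_dvd_card_qreg_of_central hcC
  have hcongr : Nat.card {g : H | g ∈ C ∧ ¬ q ∣ orderOf g}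
      = Nat.card {x : ↥C // ¬ q ∣ orderOf x} := Nat.card_congr
    { toFun := fun g => ⟨⟨g.1, g.2.1⟩, by
        have h3 := g.2.2
        rw [← Subgroup.orderOf_mk (H := C) g.1 g.2.1] at h3
        exact h3⟩
      invFun := fun x => ⟨x.1.1, x.1.2, by
        have h3 := x.2
        rwa [← Subgroup.orderOf_coe x.1] at h3⟩
      left_inv := fun g => Subtype.ext rfl
      right_inv := fun x => Subtype.ext (Subtype.ext rfl) }
  intro hd
  have h1 : q ∣ Nat.card T := hd
  have h2 := (Nat.modEq_zero_iff_dvd).mp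
    (hmod.symm.trans ((Nat.modEq_zero_iff_dvd).mpr h1))
  rw [hfix, hcongr] at h2
  exact hne h2

/-- the set of central q-elements has cardinality the q-part of the center -/
lemma card_central_qel [Finite G] :
    Nat.card {z : G | z ∈ Subgroup.center G ∧ QEl q z}
      = q ^ (Nat.card (Subgroup.center G)).factorization q := by
  set Z := Subgroup.center G with hZ
  let Pz : Sylow q ↥Z := Classical.arbitrary _
  haveI := Sylow.unique_of_normal Pz (Subgroup.normal_of_comm _)
  set L : Subgroup G := (Pz : Subgroup ↥Z).map Z.subtype with hL
  have hseq : {z : G | z ∈ Subgroup.center G ∧ QEl q z} = (L : Set G) := by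
    ext z
    constructor
    · rintro ⟨hz, hq'⟩
      have hq2 : QEl q (⟨z, hz⟩ : ↥Z) := by
        obtain ⟨n, hn⟩ := hq'
        exact ⟨n, by rw [Subgroup.orderOf_mk, hn]⟩
      obtain ⟨P₂, hP₂⟩ := (isPGroup_zpowers hq2).exists_le_sylow
      have he : P₂ = Pz := Subsingleton.elim _ _
      exact ⟨⟨z, hz⟩, he ▸ hP₂ (Subgroup.mem_zpowers _), rfl⟩
    · intro hzL
      obtain ⟨y, hy, rfl⟩ := Subgroup.mem_map.mp hzL
      refine ⟨y.2, ?_⟩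
      obtain ⟨n, hn⟩ := qel_of_mem_pgroup Pz.2 hy
      exact ⟨n, by rw [show (Z.subtype y : G) = ↑y from rfl, Subgroup.orderOf_coe, hn]⟩
  rw [hseq, SetLike.coe_sort_coe]
  have hcL : Nat.card L = Nat.card (Pz : Subgroup ↥Z) :=
    (Nat.card_congr (Subgroup.equivMapOfInjective _ _ Z.subtype_injective).toEquiv).symm
  rw [hcL, Pz.card_eq_multiplicity]

lemma centralizer_conj_index {u g : G} :
    (Subgroup.centralizer {u * g * u⁻¹}).index = (Subgroup.centralizer {g}).index := by
  have h : Subgroup.centralizer {u * g * u⁻¹}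
      = (Subgroup.centralizer {g}).comap (MulAut.conj u⁻¹).toMonoidHom := by
    ext x
    simp only [Subgroup.mem_comap, Subgroup.mem_centralizer_iff, Set.mem_singleton_iff,
      forall_eq, MulAut.conj_apply, MulEquiv.coe_toMonoidHom, inv_inv]
    constructor
    · intro hcc
      have h2 := congrArg (fun w => u⁻¹ * w * u) hcc
      calc g * (u⁻¹ * x * u) = u⁻¹ * (u * g * u⁻¹ * x) * u := by group
      _ = u⁻¹ * (x * (u * g * u⁻¹)) * u := by rw [hcc]
      _ = (u⁻¹ * x * u) * g := by group
    · intro hcc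
      calc u * g * u⁻¹ * x = u * (g * (u⁻¹ * x * u)) * u⁻¹ := by group
      _ = u * ((u⁻¹ * x * u) * g) * u⁻¹ := by rw [hcc]
      _ = x * (u * g * u⁻¹) := by group
  rw [h, Subgroup.index_comap_of_surjective _ (MulEquiv.surjective _)]

lemma qpart_central [Finite G] (Q : Sylow q G)
    (hZQ : ∀ x ∈ (Q : Subgroup G), (∀ y ∈ (Q : Subgroup G), x * y = y * x) →
      x ∈ Subgroup.center G)
    {a : G} (ha : QEl q a) (hidx : ¬ q ∣ (Subgroup.centralizer {a}).index) :
    a ∈ Subgroup.center G := by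
  obtain ⟨P, hP⟩ := exists_sylow_le_centralizer hidx
  have haP : a ∈ (P : Subgroup G) := mem_sylow_of_centralizes P ha
    (Subgroup.mem_centralizer_iff.mpr fun u hu =>
      (Subgroup.mem_centralizer_iff.mp (hP hu) a rfl).symm)
  obtain ⟨g₀, hg₀⟩ := MulAction.exists_smul_eq G P Q
  have hx'Q : g₀ * a * g₀⁻¹ ∈ (Q : Subgroup G) := by
    rw [← hg₀, Sylow.coe_subgroup_smul, Subgroup.mem_pointwise_smul_iff_inv_smul_mem]
    have : (MulAut.conj g₀)⁻¹ • (g₀ * a * g₀⁻¹) = a := by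
      simp only [MulAut.smul_def, MulAut.conj_inv_apply]
      group
    rwa [this]
  have hcomm : ∀ y ∈ (Q : Subgroup G), (g₀ * a * g₀⁻¹) * y = y * (g₀ * a * g₀⁻¹) := by
    intro y hy
    rw [← hg₀, Sylow.coe_subgroup_smul, Subgroup.mem_pointwise_smul_iff_inv_smul_mem] at hy
    simp only [MulAut.smul_def, MulAut.conj_inv_apply] at hy
    have hcy : a * (g₀⁻¹ * y * g₀) = (g₀⁻¹ * y * g₀) * a :=
      Subgroup.mem_centralizer_iff.mp (hP hy) a rfl
    calc (g₀ * a * g₀⁻¹) * y = g₀ * (a * (g₀⁻¹ * y * g₀)) * g₀⁻¹ := by group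
    _ = g₀ * ((g₀⁻¹ * y * g₀) * a) * g₀⁻¹ := by rw [hcy]
    _ = y * (g₀ * a * g₀⁻¹) := by group
  have hx'c := hZQ _ hx'Q hcomm
  rw [Subgroup.mem_center_iff]
  intro w
  have hx := Subgroup.mem_center_iff.mp hx'c (g₀ * w * g₀⁻¹)
  calc w * a = g₀⁻¹ * ((g₀ * w * g₀⁻¹) * (g₀ * a * g₀⁻¹)) * g₀ := by group
  _ = g₀⁻¹ * ((g₀ * a * g₀⁻¹) * (g₀ * w * g₀⁻¹)) * g₀ := by rw [hx]
  _ = a * w := by group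

end Helpers


/-- If `Z(Q) ≤ Z(G)` and `C_G(Q)` has a normal Hall π-subgroup, then the q-part of
`|S_{q'}(G_π)|` equals `|Z(G)|_q`. -/
theorem stmt18 {G : Type*} [Group G] [Finite G] (π : Set ℕ) (q : ℕ)
    [Fact q.Prime] (hqπ : q ∈ π) (Q : Sylow q G)
    (hZQ : ∀ x ∈ (Q : Subgroup G), (∀ y ∈ (Q : Subgroup G), x * y = y * x) →
      x ∈ Subgroup.center G)
    (hHall : ∃ K : Subgroup (Subgroup.centralizer (Q : Set G)), K.Normal ∧
      (∀ p : ℕ, p.Prime → p ∣ Nat.card K → p ∈ π) ∧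
      (∀ p : ℕ, p.Prime → p ∣ K.index → p ∉ π)) :
    (Nat.card {g : G // IsPiElement π g ∧
        ¬ q ∣ (Subgroup.centralizer {g}).index}).factorization q
      = (Nat.card (Subgroup.center G)).factorization q := by
  classical
  have hq : q.Prime := Fact.out
  obtain ⟨K, hKn, hKπ, hKi⟩ := hHall
  set S : Set G := {g : G | IsPiElement π g ∧ ¬ q ∣ (Subgroup.centralizer {g}).index} with hSdef
  set T : Set G := {g : G | (IsPiElement π g ∧ ¬ q ∣ (Subgroup.centralizer {g}).index) ∧
    ¬ q ∣ orderOf g} with hTdef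
  -- centralizer monotonicity along zpowers
  have hctr : ∀ {g w : G}, w ∈ Subgroup.zpowers g →
      Subgroup.centralizer {g} ≤ Subgroup.centralizer {w} := by
    rintro g w ⟨i, rfl⟩ x hx
    have hgx : g * x = x * g := Subgroup.mem_centralizer_iff.mp hx g rfl
    refine Subgroup.mem_centralizer_iff.mpr ?_
    intro y hy
    rw [Set.mem_singleton_iff] at hy
    subst hy
    exact Commute.zpow_left hgx i
  -- decomposition hypothesis
  have hdec : ∀ g ∈ S, ∃ a b : G, a * b = g ∧
      (a ∈ Subgroup.center G ∧ QEl q a) ∧ b ∈ T := by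
    intro g hg
    obtain ⟨a, b, hab, haz, hbz, ha, hb⟩ := exists_decomp (q := q) g
    have hidxa : ¬ q ∣ (Subgroup.centralizer {a}).index := fun hd =>
      hg.2 (hd.trans (Subgroup.index_dvd_of_le (hctr haz)))
    have hidxb : ¬ q ∣ (Subgroup.centralizer {b}).index := fun hd =>
      hg.2 (hd.trans (Subgroup.index_dvd_of_le (hctr hbz)))
    refine ⟨a, b, hab, ⟨qpart_central Q hZQ ha hidxa, ha⟩, ⟨⟨?_, hidxb⟩, hb⟩⟩
    intro p hp hpd
    exact hg.1 p hp (hpd.trans (orderOf_dvd_of_mem_zpowers hbz))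
  -- multiplication hypothesis
  have hmul : ∀ a, a ∈ Subgroup.center G → QEl q a → ∀ t ∈ T, a * t ∈ S := by
    intro a hac haq t ht
    have hca : ∀ x : G, Commute a x := fun x => (Subgroup.mem_center_iff.mp hac x).symm
    obtain ⟨n, hn⟩ := haq
    constructor
    · -- π-element
      intro p hp hpd
      have h1 : orderOf (a * t) ∣ orderOf a * orderOf t :=
        (hca t).orderOf_mul_dvd_mul_orderOf
      rcases hp.dvd_mul.mp (hpd.trans h1) with h2 | h2
      · rw [hn] at h2
        have := (Nat.prime_dvd_prime_iff_eq hp hq).mp (hp.dvd_of_dvd_pow h2)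
        rwa [this]
      · exact ht.1.1 p hp h2
    · -- index
      have hle : Subgroup.centralizer {t} ≤ Subgroup.centralizer {a * t} := by
        intro x hx
        have htx : t * x = x * t := Subgroup.mem_centralizer_iff.mp hx t rfl
        refine Subgroup.mem_centralizer_iff.mpr ?_
        intro y hy
        rw [Set.mem_singleton_iff] at hy
        subst hy
        calc (a * t) * x = a * (t * x) := by group
        _ = a * (x * t) := by rw [htx]
        _ = (a * x) * t := by rw [mul_assoc]
        _ = (x * a) * t := by rw [(hca x).eq]
        _ = x * (a * t) := by rw [mul_assoc]
      exact fun hd => ht.1.2 (hd.trans (Subgroup.index_dvd_of_le hle))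
  have hprod := card_set_eq_mul (S := S) (T := T) (fun t ht => ht.2) hdec hmul
  -- conjugation invariance of T
  have hTinv : ∀ u ∈ (Q : Subgroup G), ∀ g ∈ T, u * g * u⁻¹ ∈ T := by
    intro u _ g hg
    have horder : orderOf (u * g * u⁻¹) = orderOf g := by
      have h0 := orderOf_injective (MulAut.conj u).toMonoidHom
        (MulEquiv.injective (MulAut.conj u)) g
      simpa using h0
    refine ⟨⟨?_, ?_⟩, ?_⟩
    · intro p hp hpd
      exact hg.1.1 p hp (horder ▸ hpd)
    · rw [centralizer_conj_index]
      exact hg.1.2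
    · rw [horder]
      exact hg.2
  have hmod := card_modEq_fixed (Q : Subgroup G) Q.2 T hTinv
  let C : Subgroup G := Subgroup.centralizer (Q : Set G)
  let K' : Subgroup G := K.map C.subtype
  -- the fixed points are exactly the q-regular elements of K'
  have hfix : {g : G | g ∈ T ∧ ∀ u ∈ (Q : Subgroup G), u * g = g * u}
      = {g : G | g ∈ K' ∧ ¬ q ∣ orderOf g} := by
    ext g
    simp only [Set.mem_setOf_eq]
    constructor
    · rintro ⟨⟨⟨hπ, _⟩, hqo⟩, hcomm⟩
      have hgC : g ∈ C := Subgroup.mem_centralizer_iff.mpr (fun u hu => hcomm u hu)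
      haveI : K.Normal := hKn
      have h1 : orderOf ((QuotientGroup.mk' K) ⟨g, hgC⟩) ∣ orderOf (⟨g, hgC⟩ : ↥C) :=
        orderOf_map_dvd _ _
      have h2 : orderOf ((QuotientGroup.mk' K) ⟨g, hgC⟩) ∣ K.index :=
        orderOf_dvd_natCard _
      have hoc : orderOf (⟨g, hgC⟩ : ↥C) = orderOf g := Subgroup.orderOf_mk g hgC
      have h3 : orderOf ((QuotientGroup.mk' K) ⟨g, hgC⟩) = 1 := by
        by_contra hne
        obtain ⟨p, hp, hpd⟩ := Nat.exists_prime_and_dvd hne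
        exact hKi p hp (hpd.trans h2) (hπ p hp (hpd.trans (hoc ▸ h1)))
      have h4 : (⟨g, hgC⟩ : ↥C) ∈ K := (QuotientGroup.eq_one_iff _).mp
        (orderOf_eq_one_iff.mp h3)
      exact ⟨⟨⟨g, hgC⟩, h4, rfl⟩, hqo⟩
    · rintro ⟨hgK, hqo⟩
      obtain ⟨y, hy, rfl⟩ := Subgroup.mem_map.mp hgK
      have hgC : (y : G) ∈ C := y.2
      have hcomm : ∀ u ∈ (Q : Subgroup G), u * (y : G) = (y : G) * u := fun u hu =>
        Subgroup.mem_centralizer_iff.mp hgC u hu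
      refine ⟨⟨⟨?_, ?_⟩, hqo⟩, hcomm⟩
      · intro p hp hpd
        apply hKπ p hp
        have h6 : orderOf y ∣ Nat.card ↥K := Subgroup.orderOf_dvd_natCard K hy
        rw [← Subgroup.orderOf_coe y] at h6
        exact hpd.trans h6
      · apply not_dvd_index_of_sylow_le Q
        intro u hu
        refine Subgroup.mem_centralizer_iff.mpr ?_
        intro w hw
        rw [Set.mem_singleton_iff] at hw
        subst hw
        exact (hcomm u hu).symm
  -- counting q-regular elements of K'
  have hK'card : ¬ q ∣ Nat.card {g : G | g ∈ K' ∧ ¬ q ∣ orderOf g} := by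
    have hcongr : Nat.card {g : G | g ∈ K' ∧ ¬ q ∣ orderOf g}
        = Nat.card {x : ↥K' // ¬ q ∣ orderOf x} := Nat.card_congr
      { toFun := fun g => ⟨⟨g.1, g.2.1⟩, by
          have h3 := g.2.2
          rw [← Subgroup.orderOf_mk (H := K') g.1 g.2.1] at h3
          exact h3⟩
        invFun := fun x => ⟨x.1.1, x.1.2, by
          have h3 := x.2
          rwa [← Subgroup.orderOf_coe x.1] at h3⟩
        left_inv := fun g => Subtype.ext rfl
        right_inv := fun x => Subtype.ext (Subtype.ext rfl) }
    rw [hcongr]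
    exact not_dvd_card_qreg ↥K'
  have hqT : ¬ q ∣ Nat.card T := by
    intro hd
    have h2 := Nat.modEq_zero_iff_dvd.mp
      ((hmod.symm).trans (Nat.modEq_zero_iff_dvd.mpr hd))
    rw [hfix] at h2
    exact hK'card h2
  -- final computation
  have hT0 : Nat.card T ≠ 0 := fun h => hqT (h ▸ dvd_zero q)
  have hgoal : Nat.card {g : G // IsPiElement π g ∧
      ¬ q ∣ (Subgroup.centralizer {g}).index} = Nat.card S :=
    Nat.card_congr (Equiv.subtypeEquivRight (fun _ => Iff.rfl))
  rw [hgoal, hprod, card_central_qel,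
    Nat.factorization_mul (pow_ne_zero _ hq.pos.ne') hT0, Finsupp.add_apply,
    hq.factorization_pow, Finsupp.single_eq_same,
    Nat.factorization_eq_zero_of_not_dvd hqT, add_zero]
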